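/- arXiv:2110.03970 — 2 statements merged into one kernel-verified Lean document; each statement's English description precedes it below -/
import Mathlib

section
/- The normalized vertical R-matrix R̄_{λμ}(z;p) := 𝔮^{-(|λ|+|μ|)} ∏_{(i,j)∈λ}∏_{(k,l)∈μ} [θ_p(q₁⁻¹ z⁻¹ x_{kl}/x_{ij}) θ_p(q₂⁻¹ z⁻¹ x_{kl}/x_{ij}) θ_p(q₃⁻¹ z⁻¹ x_{kl}/x_{ij})] / [θ_p(q₁ z⁻¹ x_{kl}/x_{ij}) θ_p(q₂ z⁻¹ x_{kl}/x_{ij}) θ_p(q₃ z⁻¹ x_{kl}/x_{ij})] · ∏_{(i,j)∈λ} θ_p(z⁻¹ q₃/x_{ij})/θ_p(z⁻¹/x_{ij}) · ∏_{(i,j)∈μ} θ_p(x_{ij} z⁻¹)/θ_p(q₁q₂ x_{ij} z⁻¹), with x_{ij} = q₁^{j-1} q₂^{i-1} and q₁q₂q₃ = 1, satisfies the unitarity relation R̄_{μλ}(z⁻¹;p) = R̄_{λμ}(z;p)⁻¹. -/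
open Complex Finset

/-- The short theta function `θ_p(z) = (z;p)_∞ (p z⁻¹;p)_∞`. -/
noncomputable def theta (p z : ℂ) : ℂ :=
  (∏' k : ℕ, (1 - z * p ^ k)) * ∏' k : ℕ, (1 - z⁻¹ * p ^ (k + 1))

/-- `x_{ij} = q₁^{j-1} q₂^{i-1}` in 0-based coordinates. -/
noncomputable def xbox (q₁ q₂ : ℂ) (i j : ℕ) : ℂ := q₁ ^ j * q₂ ^ i

/-- The normalized vertical `R`-matrix `R̄_{λμ}(z;p)`, for partitions encoded as
functions `ℕ → ℕ` vanishing from indices `Nl` (resp. `Nm`) on. -/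
noncomputable def Rbar (p q₁ q₂ q₃ 𝔮 : ℂ) (lam mu : ℕ → ℕ) (Nl Nm : ℕ) (z : ℂ) : ℂ :=
  𝔮 ^ (-(((∑ i ∈ Finset.range Nl, lam i) + ∑ i ∈ Finset.range Nm, mu i : ℕ) : ℤ)) *
    (∏ i ∈ Finset.range Nl, ∏ j ∈ Finset.range (lam i),
      ∏ k ∈ Finset.range Nm, ∏ l ∈ Finset.range (mu k),
        (theta p (q₁⁻¹ * z⁻¹ * xbox q₁ q₂ k l / xbox q₁ q₂ i j) *
            theta p (q₂⁻¹ * z⁻¹ * xbox q₁ q₂ k l / xbox q₁ q₂ i j) *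
            theta p (q₃⁻¹ * z⁻¹ * xbox q₁ q₂ k l / xbox q₁ q₂ i j)) /
          (theta p (q₁ * z⁻¹ * xbox q₁ q₂ k l / xbox q₁ q₂ i j) *
            theta p (q₂ * z⁻¹ * xbox q₁ q₂ k l / xbox q₁ q₂ i j) *
            theta p (q₃ * z⁻¹ * xbox q₁ q₂ k l / xbox q₁ q₂ i j))) *
    (∏ i ∈ Finset.range Nl, ∏ j ∈ Finset.range (lam i),
      theta p (z⁻¹ * q₃ / xbox q₁ q₂ i j) / theta p (z⁻¹ / xbox q₁ q₂ i j)) *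
    ∏ i ∈ Finset.range Nm, ∏ j ∈ Finset.range (mu i),
      theta p (xbox q₁ q₂ i j * z⁻¹) / theta p (q₁ * q₂ * xbox q₁ q₂ i j * z⁻¹)

section AuxLemmas

open Filter

private lemma hasProd_zero_of_exists {f : ℕ → ℂ} (k₀ : ℕ) (h : f k₀ = 0) : HasProd f 0 := by
  have key : ∀ s : Finset ℕ, {k₀} ⊆ s → ∏ i ∈ s, f i = 0 := fun s hs =>
    Finset.prod_eq_zero (hs (Finset.mem_singleton_self k₀)) h
  have : (fun s : Finset ℕ => ∏ i ∈ s, f i) =ᶠ[atTop] (fun _ => (0:ℂ)) :=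
    Filter.eventually_atTop.2 ⟨{k₀}, key⟩
  exact (Filter.tendsto_congr' this).2 tendsto_const_nhds

private lemma multipliable_one_sub (p w : ℂ) (hp1 : ‖p‖ < 1) :
    Multipliable (fun k : ℕ => 1 - w * p ^ k) := by
  by_cases hzero : ∃ k, (1 : ℂ) - w * p ^ k = 0
  · obtain ⟨k₀, h⟩ := hzero
    exact ⟨0, hasProd_zero_of_exists k₀ h⟩
  push_neg at hzero
  refine Complex.multipliable_of_summable_log ?_
  apply Summable.of_norm_bounded_eventually (g := fun n => 2 * (‖w‖ * ‖p‖ ^ n))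
  · exact (((summable_geometric_of_lt_one (norm_nonneg p) hp1).mul_left ‖w‖).mul_left 2)
  · rw [Nat.cofinite_eq_atTop]
    have h0 : Tendsto (fun n : ℕ => ‖w‖ * ‖p‖ ^ n) atTop (nhds 0) := by
      simpa using (tendsto_pow_atTop_nhds_zero_of_lt_one (norm_nonneg p) hp1).const_mul ‖w‖
    filter_upwards [h0.eventually_lt_const (by norm_num : (0:ℝ) < 1/2)] with n hn
    have hu : ‖-(w * p ^ n)‖ = ‖w‖ * ‖p‖ ^ n := by
      rw [norm_neg, norm_mul, norm_pow]
    have hu2 : ‖-(w * p ^ n)‖ < 1/2 := by rw [hu]; exact hn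
    have hu0 : (0:ℝ) ≤ ‖-(w * p ^ n)‖ := norm_nonneg _
    have h1 : ‖Complex.log (1 - w * p ^ n)‖ ≤
        ‖-(w * p ^ n)‖ ^ 2 * (1 - ‖-(w * p ^ n)‖)⁻¹ / 2 + ‖-(w * p ^ n)‖ := by
      rw [sub_eq_add_neg]
      exact Complex.norm_log_one_add_le (by linarith)
    have hinv : (1 - ‖-(w * p ^ n)‖)⁻¹ ≤ 2 := by
      rw [inv_le_comm₀ (by linarith) (by norm_num)]; linarith
    calc ‖Complex.log (1 - w * p ^ n)‖ ≤ _ := h1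
      _ ≤ 2 * (‖w‖ * ‖p‖ ^ n) := by rw [← hu]; nlinarith

/-- The functional equation `θ_p(u⁻¹) = -u⁻¹ θ_p(u)`. -/
private lemma theta_inv (p : ℂ) (hp1 : ‖p‖ < 1) {u : ℂ} (hu : u ≠ 0) :
    theta p u⁻¹ = -u⁻¹ * theta p u := by
  have key : ∀ w : ℂ, (∏' k : ℕ, (1 - w * p ^ k))
      = (1 - w) * ∏' k : ℕ, (1 - w * p ^ (k + 1)) := by
    intro w
    have hm : Multipliable (fun k : ℕ => 1 - w * p ^ (k + 1)) := by
      have := multipliable_one_sub p (w * p) hp1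
      refine this.congr fun k => ?_
      rw [mul_assoc, ← pow_succ']
    have h2 := tprod_eq_zero_mul' (f := fun k : ℕ => 1 - w * p ^ k) hm
    simp only [pow_zero, mul_one] at h2
    exact h2
  rw [theta, theta, inv_inv, key u⁻¹, key u]
  set A := ∏' k : ℕ, (1 - u⁻¹ * p ^ (k + 1))
  set B := ∏' k : ℕ, (1 - u * p ^ (k + 1))
  linear_combination (-(A*B)) * inv_mul_cancel₀ hu

private lemma theta_div_inv (p : ℂ) (hp1 : ‖p‖ < 1) {a b : ℂ} (ha : a ≠ 0) (hb : b ≠ 0) :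
    theta p a⁻¹ / theta p b⁻¹ = (b / a) * (theta p a / theta p b) := by
  rw [theta_inv p hp1 ha, theta_inv p hp1 hb, mul_div_mul_comm]
  congr 1
  field_simp

private lemma theta_triple_inv (p : ℂ) (hp1 : ‖p‖ < 1) {a b c d e f : ℂ}
    (ha : a ≠ 0) (hb : b ≠ 0) (hc : c ≠ 0)
    (h : a * b * c = d * e * f) :
    theta p a⁻¹ * theta p b⁻¹ * theta p c⁻¹ / (theta p d⁻¹ * theta p e⁻¹ * theta p f⁻¹)
      = (theta p d * theta p e * theta p f / (theta p a * theta p b * theta p c))⁻¹ := by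
  have hd : d ≠ 0 := fun h0 => ha (by
    have : a * b * c = 0 := by rw [h, h0]; ring
    rcases mul_eq_zero.1 this with h1 | h1
    · rcases mul_eq_zero.1 h1 with h2 | h2
      · exact h2
      · exact absurd h2 hb
    · exact absurd h1 hc)
  have hdef : d * e * f ≠ 0 := by rw [← h]; exact mul_ne_zero (mul_ne_zero ha hb) hc
  have he : e ≠ 0 := fun h0 => hdef (by rw [h0]; ring)
  have hf : f ≠ 0 := fun h0 => hdef (by rw [h0]; ring)
  have hd' : d ≠ 0 := fun h0 => hdef (by rw [h0]; ring)
  rw [inv_div, theta_inv p hp1 ha, theta_inv p hp1 hb, theta_inv p hp1 hc,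
    theta_inv p hp1 hd', theta_inv p hp1 he, theta_inv p hp1 hf]
  have h1 : -a⁻¹ * theta p a * (-b⁻¹ * theta p b) * (-c⁻¹ * theta p c)
      = -(a*b*c)⁻¹ * (theta p a * theta p b * theta p c) := by ring
  have h2 : -d⁻¹ * theta p d * (-e⁻¹ * theta p e) * (-f⁻¹ * theta p f)
      = -(a*b*c)⁻¹ * (theta p d * theta p e * theta p f) := by
    rw [show (a*b*c) = d*e*f from h]; ring
  rw [h1, h2, mul_div_mul_left _ _ (by simp [ha, hb, hc] : -(a*b*c)⁻¹ ≠ 0)]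

private lemma prod_sigma2 {M : Type*} [CommMonoid M] (a b : ℕ) (s t : ℕ → ℕ)
    (h : ℕ → ℕ → ℕ → ℕ → M) :
    ∏ i ∈ range a, ∏ j ∈ range (s i), ∏ k ∈ range b, ∏ l ∈ range (t k), h i j k l
      = ∏ x ∈ (range a).sigma (fun i => range (s i)),
          ∏ y ∈ (range b).sigma (fun k => range (t k)), h x.1 x.2 y.1 y.2 := by
  rw [Finset.prod_sigma' (range a) (fun i => range (s i))
      (fun i j => ∏ k ∈ range b, ∏ l ∈ range (t k), h i j k l)]
  exact Finset.prod_congr rfl fun x _ =>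
    Finset.prod_sigma' (range b) (fun k => range (t k)) (fun k l => h x.1 x.2 k l)

private lemma prod4_swap {M : Type*} [CommMonoid M] (a b : ℕ) (s t : ℕ → ℕ)
    (g : ℕ → ℕ → ℕ → ℕ → M) :
    ∏ i ∈ range a, ∏ j ∈ range (s i), ∏ k ∈ range b, ∏ l ∈ range (t k), g i j k l
      = ∏ k ∈ range b, ∏ l ∈ range (t k), ∏ i ∈ range a, ∏ j ∈ range (s i), g i j k l := by
  rw [prod_sigma2 a b s t g, prod_sigma2 b a t s (fun k l i j => g i j k l),
    Finset.prod_comm]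

end AuxLemmas

/-- Unitarity of the normalized vertical `R`-matrix: `R̄_{μλ}(z⁻¹;p) = R̄_{λμ}(z;p)⁻¹`,
for generic `z` (so that none of the theta functions involved vanishes). -/
theorem Rbar_unitarity (p q₁ q₂ q₃ 𝔮 z : ℂ)
    (hq : q₁ * q₂ * q₃ = 1) (hq₁ : q₁ ≠ 0) (hq₂ : q₂ ≠ 0)
    (h𝔮 : 𝔮 ^ 2 = q₃) (hz : z ≠ 0) (hp0 : 0 < ‖p‖) (hp1 : ‖p‖ < 1)
    (lam mu : ℕ → ℕ) (hlam : Antitone lam) (hmu : Antitone mu)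
    (Nl Nm : ℕ) (hNl : ∀ i, Nl ≤ i → lam i = 0) (hNm : ∀ i, Nm ≤ i → mu i = 0)
    (hgen : ∀ a b : ℤ, theta p (z * q₁ ^ a * q₂ ^ b) ≠ 0 ∧
      theta p (z⁻¹ * q₁ ^ a * q₂ ^ b) ≠ 0) :
    Rbar p q₁ q₂ q₃ 𝔮 mu lam Nm Nl z⁻¹ = (Rbar p q₁ q₂ q₃ 𝔮 lam mu Nl Nm z)⁻¹ := by
  have hq₃ : q₃ ≠ 0 := by
    intro h; rw [h, mul_zero] at hq; exact one_ne_zero hq.symm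
  have h𝔮0 : 𝔮 ≠ 0 := by
    intro h; rw [h] at h𝔮; exact hq₃ (by simpa using h𝔮.symm)
  have hzi : z⁻¹ ≠ 0 := inv_ne_zero hz
  have hx : ∀ i j : ℕ, xbox q₁ q₂ i j ≠ 0 := fun i j =>
    mul_ne_zero (pow_ne_zero _ hq₁) (pow_ne_zero _ hq₂)
  have hq3e : q₃ = (q₁ * q₂)⁻¹ := eq_inv_of_mul_eq_one_right hq
  have h123 : q₁ * q₂ * q₃ = q₁⁻¹ * q₂⁻¹ * q₃⁻¹ := by
    rw [show q₁⁻¹ * q₂⁻¹ * q₃⁻¹ = (q₁ * q₂ * q₃)⁻¹ by ring, hq, inv_one]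
  -- argument-inversion identities
  have eA : ∀ q : ℂ, q ≠ 0 → ∀ A B : ℂ, A ≠ 0 → B ≠ 0 →
      q⁻¹ * (z⁻¹)⁻¹ * A / B = (q * z⁻¹ * B / A)⁻¹ := by
    intro q hqne A B hA hB
    field_simp
  have eB : ∀ q : ℂ, q ≠ 0 → ∀ A B : ℂ, A ≠ 0 → B ≠ 0 →
      q * (z⁻¹)⁻¹ * A / B = (q⁻¹ * z⁻¹ * B / A)⁻¹ := by
    intro q hqne A B hA hB
    have := eA q⁻¹ (inv_ne_zero hqne) A B hA hB
    rwa [inv_inv] at this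
  -- the quadruple-product termwise identity
  have hquad : ∀ i j k l : ℕ,
      (theta p (q₁⁻¹ * (z⁻¹)⁻¹ * xbox q₁ q₂ k l / xbox q₁ q₂ i j) *
          theta p (q₂⁻¹ * (z⁻¹)⁻¹ * xbox q₁ q₂ k l / xbox q₁ q₂ i j) *
          theta p (q₃⁻¹ * (z⁻¹)⁻¹ * xbox q₁ q₂ k l / xbox q₁ q₂ i j)) /
        (theta p (q₁ * (z⁻¹)⁻¹ * xbox q₁ q₂ k l / xbox q₁ q₂ i j) *
          theta p (q₂ * (z⁻¹)⁻¹ * xbox q₁ q₂ k l / xbox q₁ q₂ i j) *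
          theta p (q₃ * (z⁻¹)⁻¹ * xbox q₁ q₂ k l / xbox q₁ q₂ i j))
      = ((theta p (q₁⁻¹ * z⁻¹ * xbox q₁ q₂ i j / xbox q₁ q₂ k l) *
          theta p (q₂⁻¹ * z⁻¹ * xbox q₁ q₂ i j / xbox q₁ q₂ k l) *
          theta p (q₃⁻¹ * z⁻¹ * xbox q₁ q₂ i j / xbox q₁ q₂ k l)) /
        (theta p (q₁ * z⁻¹ * xbox q₁ q₂ i j / xbox q₁ q₂ k l) *
          theta p (q₂ * z⁻¹ * xbox q₁ q₂ i j / xbox q₁ q₂ k l) *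
          theta p (q₃ * z⁻¹ * xbox q₁ q₂ i j / xbox q₁ q₂ k l)))⁻¹ := by
    intro i j k l
    rw [eA q₁ hq₁ _ _ (hx k l) (hx i j), eA q₂ hq₂ _ _ (hx k l) (hx i j),
      eA q₃ hq₃ _ _ (hx k l) (hx i j), eB q₁ hq₁ _ _ (hx k l) (hx i j),
      eB q₂ hq₂ _ _ (hx k l) (hx i j), eB q₃ hq₃ _ _ (hx k l) (hx i j)]
    have hnz : ∀ q : ℂ, q ≠ 0 → q * z⁻¹ * xbox q₁ q₂ i j / xbox q₁ q₂ k l ≠ 0 :=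
      fun q hqne => div_ne_zero (mul_ne_zero (mul_ne_zero hqne hzi) (hx i j)) (hx k l)
    refine theta_triple_inv p hp1 (hnz q₁ hq₁) (hnz q₂ hq₂) (hnz q₃ hq₃) ?_
    have r1 : q₁ * z⁻¹ * xbox q₁ q₂ i j / xbox q₁ q₂ k l *
        (q₂ * z⁻¹ * xbox q₁ q₂ i j / xbox q₁ q₂ k l) *
        (q₃ * z⁻¹ * xbox q₁ q₂ i j / xbox q₁ q₂ k l)
        = (q₁ * q₂ * q₃) * (z⁻¹ * xbox q₁ q₂ i j / xbox q₁ q₂ k l)^3 := by ring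
    have r2 : q₁⁻¹ * z⁻¹ * xbox q₁ q₂ i j / xbox q₁ q₂ k l *
        (q₂⁻¹ * z⁻¹ * xbox q₁ q₂ i j / xbox q₁ q₂ k l) *
        (q₃⁻¹ * z⁻¹ * xbox q₁ q₂ i j / xbox q₁ q₂ k l)
        = (q₁⁻¹ * q₂⁻¹ * q₃⁻¹) * (z⁻¹ * xbox q₁ q₂ i j / xbox q₁ q₂ k l)^3 := by ring
    rw [r1, r2, h123]
  -- the two single-box termwise identities
  have hBterm : ∀ i j : ℕ,
      theta p ((z⁻¹)⁻¹ * q₃ / xbox q₁ q₂ i j) / theta p ((z⁻¹)⁻¹ / xbox q₁ q₂ i j)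
      = q₃ * (theta p (xbox q₁ q₂ i j * z⁻¹) /
          theta p (q₁ * q₂ * xbox q₁ q₂ i j * z⁻¹))⁻¹ := by
    intro i j
    have e1 : (z⁻¹)⁻¹ * q₃ / xbox q₁ q₂ i j = (q₁ * q₂ * xbox q₁ q₂ i j * z⁻¹)⁻¹ := by
      rw [hq3e]; field_simp
    have e2 : (z⁻¹)⁻¹ / xbox q₁ q₂ i j = (xbox q₁ q₂ i j * z⁻¹)⁻¹ := by
      field_simp
    rw [e1, e2, theta_div_inv p hp1
      (mul_ne_zero (mul_ne_zero (mul_ne_zero hq₁ hq₂) (hx i j)) hzi)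
      (mul_ne_zero (hx i j) hzi), inv_div]
    congr 1
    rw [hq3e]
    field_simp
    exact div_self (hx i j)
  have hCterm : ∀ i j : ℕ,
      theta p (xbox q₁ q₂ i j * (z⁻¹)⁻¹) / theta p (q₁ * q₂ * xbox q₁ q₂ i j * (z⁻¹)⁻¹)
      = q₃ * (theta p (z⁻¹ * q₃ / xbox q₁ q₂ i j) / theta p (z⁻¹ / xbox q₁ q₂ i j))⁻¹ := by
    intro i j
    have e1 : xbox q₁ q₂ i j * (z⁻¹)⁻¹ = (z⁻¹ / xbox q₁ q₂ i j)⁻¹ := by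
      field_simp
    have e2 : q₁ * q₂ * xbox q₁ q₂ i j * (z⁻¹)⁻¹ = (z⁻¹ * q₃ / xbox q₁ q₂ i j)⁻¹ := by
      rw [hq3e]; field_simp
    rw [e1, e2, theta_div_inv p hp1
      (div_ne_zero hzi (hx i j))
      (div_ne_zero (mul_ne_zero hzi hq₃) (hx i j)), inv_div]
    congr 1
    rw [hq3e]
    field_simp
    exact div_self (hx i j)
  -- abbreviations for the three big products of `Rbar lam mu z`
  set A := ∏ i ∈ Finset.range Nl, ∏ j ∈ Finset.range (lam i),
      ∏ k ∈ Finset.range Nm, ∏ l ∈ Finset.range (mu k),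
        (theta p (q₁⁻¹ * z⁻¹ * xbox q₁ q₂ k l / xbox q₁ q₂ i j) *
            theta p (q₂⁻¹ * z⁻¹ * xbox q₁ q₂ k l / xbox q₁ q₂ i j) *
            theta p (q₃⁻¹ * z⁻¹ * xbox q₁ q₂ k l / xbox q₁ q₂ i j)) /
          (theta p (q₁ * z⁻¹ * xbox q₁ q₂ k l / xbox q₁ q₂ i j) *
            theta p (q₂ * z⁻¹ * xbox q₁ q₂ k l / xbox q₁ q₂ i j) *
            theta p (q₃ * z⁻¹ * xbox q₁ q₂ k l / xbox q₁ q₂ i j)) with hA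
  set B := ∏ i ∈ Finset.range Nl, ∏ j ∈ Finset.range (lam i),
      theta p (z⁻¹ * q₃ / xbox q₁ q₂ i j) / theta p (z⁻¹ / xbox q₁ q₂ i j) with hB
  set C := ∏ i ∈ Finset.range Nm, ∏ j ∈ Finset.range (mu i),
      theta p (xbox q₁ q₂ i j * z⁻¹) / theta p (q₁ * q₂ * xbox q₁ q₂ i j * z⁻¹) with hC
  have hA' : (∏ i ∈ Finset.range Nm, ∏ j ∈ Finset.range (mu i),
      ∏ k ∈ Finset.range Nl, ∏ l ∈ Finset.range (lam k),
        (theta p (q₁⁻¹ * (z⁻¹)⁻¹ * xbox q₁ q₂ k l / xbox q₁ q₂ i j) *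
            theta p (q₂⁻¹ * (z⁻¹)⁻¹ * xbox q₁ q₂ k l / xbox q₁ q₂ i j) *
            theta p (q₃⁻¹ * (z⁻¹)⁻¹ * xbox q₁ q₂ k l / xbox q₁ q₂ i j)) /
          (theta p (q₁ * (z⁻¹)⁻¹ * xbox q₁ q₂ k l / xbox q₁ q₂ i j) *
            theta p (q₂ * (z⁻¹)⁻¹ * xbox q₁ q₂ k l / xbox q₁ q₂ i j) *
            theta p (q₃ * (z⁻¹)⁻¹ * xbox q₁ q₂ k l / xbox q₁ q₂ i j))) = A⁻¹ := by
    calc (∏ i ∈ Finset.range Nm, ∏ j ∈ Finset.range (mu i),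
        ∏ k ∈ Finset.range Nl, ∏ l ∈ Finset.range (lam k),
          (theta p (q₁⁻¹ * (z⁻¹)⁻¹ * xbox q₁ q₂ k l / xbox q₁ q₂ i j) *
              theta p (q₂⁻¹ * (z⁻¹)⁻¹ * xbox q₁ q₂ k l / xbox q₁ q₂ i j) *
              theta p (q₃⁻¹ * (z⁻¹)⁻¹ * xbox q₁ q₂ k l / xbox q₁ q₂ i j)) /
            (theta p (q₁ * (z⁻¹)⁻¹ * xbox q₁ q₂ k l / xbox q₁ q₂ i j) *
              theta p (q₂ * (z⁻¹)⁻¹ * xbox q₁ q₂ k l / xbox q₁ q₂ i j) *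
              theta p (q₃ * (z⁻¹)⁻¹ * xbox q₁ q₂ k l / xbox q₁ q₂ i j)))
        = ∏ i ∈ Finset.range Nm, ∏ j ∈ Finset.range (mu i),
            ∏ k ∈ Finset.range Nl, ∏ l ∈ Finset.range (lam k),
            ((theta p (q₁⁻¹ * z⁻¹ * xbox q₁ q₂ i j / xbox q₁ q₂ k l) *
                theta p (q₂⁻¹ * z⁻¹ * xbox q₁ q₂ i j / xbox q₁ q₂ k l) *
                theta p (q₃⁻¹ * z⁻¹ * xbox q₁ q₂ i j / xbox q₁ q₂ k l)) /
              (theta p (q₁ * z⁻¹ * xbox q₁ q₂ i j / xbox q₁ q₂ k l) *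
                theta p (q₂ * z⁻¹ * xbox q₁ q₂ i j / xbox q₁ q₂ k l) *
                theta p (q₃ * z⁻¹ * xbox q₁ q₂ i j / xbox q₁ q₂ k l)))⁻¹ := by
          refine Finset.prod_congr rfl fun i _ => Finset.prod_congr rfl fun j _ =>
            Finset.prod_congr rfl fun k _ => Finset.prod_congr rfl fun l _ => ?_
          exact hquad i j k l
      _ = (∏ i ∈ Finset.range Nm, ∏ j ∈ Finset.range (mu i),
            ∏ k ∈ Finset.range Nl, ∏ l ∈ Finset.range (lam k),
            ((theta p (q₁⁻¹ * z⁻¹ * xbox q₁ q₂ i j / xbox q₁ q₂ k l) *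
                theta p (q₂⁻¹ * z⁻¹ * xbox q₁ q₂ i j / xbox q₁ q₂ k l) *
                theta p (q₃⁻¹ * z⁻¹ * xbox q₁ q₂ i j / xbox q₁ q₂ k l)) /
              (theta p (q₁ * z⁻¹ * xbox q₁ q₂ i j / xbox q₁ q₂ k l) *
                theta p (q₂ * z⁻¹ * xbox q₁ q₂ i j / xbox q₁ q₂ k l) *
                theta p (q₃ * z⁻¹ * xbox q₁ q₂ i j / xbox q₁ q₂ k l))))⁻¹ := by
          simp only [Finset.prod_inv_distrib]
      _ = A⁻¹ := by
          rw [hA, prod4_swap Nm Nl mu lam]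
  have hB' : (∏ i ∈ Finset.range Nm, ∏ j ∈ Finset.range (mu i),
      theta p ((z⁻¹)⁻¹ * q₃ / xbox q₁ q₂ i j) / theta p ((z⁻¹)⁻¹ / xbox q₁ q₂ i j))
      = q₃ ^ (∑ i ∈ Finset.range Nm, mu i) * C⁻¹ := by
    calc (∏ i ∈ Finset.range Nm, ∏ j ∈ Finset.range (mu i),
        theta p ((z⁻¹)⁻¹ * q₃ / xbox q₁ q₂ i j) / theta p ((z⁻¹)⁻¹ / xbox q₁ q₂ i j))
        = ∏ i ∈ Finset.range Nm, ∏ j ∈ Finset.range (mu i),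
            q₃ * (theta p (xbox q₁ q₂ i j * z⁻¹) /
              theta p (q₁ * q₂ * xbox q₁ q₂ i j * z⁻¹))⁻¹ :=
          Finset.prod_congr rfl fun i _ => Finset.prod_congr rfl fun j _ => hBterm i j
      _ = q₃ ^ (∑ i ∈ Finset.range Nm, mu i) * C⁻¹ := by
          simp only [Finset.prod_mul_distrib, Finset.prod_inv_distrib, Finset.prod_const,
            Finset.card_range, Finset.prod_pow_eq_pow_sum, hC]
  have hC' : (∏ i ∈ Finset.range Nl, ∏ j ∈ Finset.range (lam i),
      theta p (xbox q₁ q₂ i j * (z⁻¹)⁻¹) / theta p (q₁ * q₂ * xbox q₁ q₂ i j * (z⁻¹)⁻¹))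
      = q₃ ^ (∑ i ∈ Finset.range Nl, lam i) * B⁻¹ := by
    calc (∏ i ∈ Finset.range Nl, ∏ j ∈ Finset.range (lam i),
        theta p (xbox q₁ q₂ i j * (z⁻¹)⁻¹) / theta p (q₁ * q₂ * xbox q₁ q₂ i j * (z⁻¹)⁻¹))
        = ∏ i ∈ Finset.range Nl, ∏ j ∈ Finset.range (lam i),
            q₃ * (theta p (z⁻¹ * q₃ / xbox q₁ q₂ i j) /
              theta p (z⁻¹ / xbox q₁ q₂ i j))⁻¹ :=
          Finset.prod_congr rfl fun i _ => Finset.prod_congr rfl fun j _ => hCterm i j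
      _ = q₃ ^ (∑ i ∈ Finset.range Nl, lam i) * B⁻¹ := by
          simp only [Finset.prod_mul_distrib, Finset.prod_inv_distrib, Finset.prod_const,
            Finset.card_range, Finset.prod_pow_eq_pow_sum, hB]
  -- put everything together
  rw [Rbar, Rbar, hA', hB', hC']
  set S := ∑ i ∈ Finset.range Nl, lam i with hS
  set T := ∑ i ∈ Finset.range Nm, mu i with hT
  have hscal : 𝔮 ^ (-((T + S : ℕ) : ℤ)) * q₃ ^ T * q₃ ^ S
      = (𝔮 ^ (-((S + T : ℕ) : ℤ)))⁻¹ := by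
    rw [show ((𝔮:ℂ) ^ (-((S + T : ℕ) : ℤ)))⁻¹ = 𝔮 ^ ((S + T : ℕ) : ℤ) by
        rw [← zpow_neg, neg_neg],
      ← h𝔮, ← pow_mul, ← pow_mul, ← zpow_natCast 𝔮 (2 * T), ← zpow_natCast 𝔮 (2 * S),
      ← zpow_add₀ h𝔮0, ← zpow_add₀ h𝔮0]
    congr 1
    push_cast
    ring
  linear_combination (A⁻¹ * B⁻¹ * C⁻¹) * hscal
end

section
/- For λ a partition of length at most n, the Macdonald identity (1-q) Σ_{s∈λ} q^{a(s)} t^{ℓ(s)+1} = Σ_{i=1}^{n} (t - q^{λ_i} t^{n+1-i}) - (1-t) Σ_{1≤i<j≤n} q^{λ_i - λ_j} t^{j-i} holds, where a(s) and ℓ(s) are the arm and leg lengths of the box s in λ. -/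
open Finset

private lemma geom_aux {R : Type*} [CommRing R] (t : R) (a d : ℕ) :
    (1 - t) * ∑ k ∈ Finset.range d, t ^ (a + k) = t ^ a - t ^ (a + d) := by
  induction d with
  | zero => simp
  | succ d ih =>
    rw [Finset.sum_range_succ, mul_add, ih]
    ring

private lemma extend_aux {R : Type*} [CommRing R] {m n : ℕ} (hmn : m ≤ n) (f : ℕ → R) :
    ∑ i ∈ Finset.range n, (if i < m then f i else 0) = ∑ i ∈ Finset.range m, f i := by
  rw [← Finset.sum_filter]
  congr 1
  ext x
  simp only [Finset.mem_filter, Finset.mem_range]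
  omega

/-- Macdonald's identity: for a partition `λ` with at most `n` parts
(encoded as `lam : ℕ → ℕ`, weakly decreasing, with `lam i = 0` for `i ≥ n`),
`(1-q) Σ_{s∈λ} q^{a(s)} t^{ℓ(s)+1}
  = Σ_{i=1}^n (t - q^{λ_i} t^{n+1-i}) - (1-t) Σ_{1≤i<j≤n} q^{λ_i-λ_j} t^{j-i}`
as an identity in any commutative ring. -/
theorem macdonald_arm_leg_identity {R : Type*} [CommRing R] (q t : R)
    (n : ℕ) (lam : ℕ → ℕ) (hmono : ∀ i j, i ≤ j → lam j ≤ lam i)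
    (hbd : ∀ i, n ≤ i → lam i = 0) :
    (1 - q) * ∑ i ∈ Finset.range n, ∑ j ∈ Finset.range (lam i),
        q ^ (lam i - j - 1) *
          t ^ (((Finset.range n).filter (fun k => j < lam k)).card - i) =
      (∑ i ∈ Finset.range n, (t - q ^ (lam i) * t ^ (n - i))) -
        (1 - t) * ∑ j ∈ Finset.range n, ∑ i ∈ Finset.range j,
          q ^ (lam i - lam j) * t ^ (j - i) := by
  suffices H : ∀ N : ℕ, ∀ lam : ℕ → ℕ, (∀ i j, i ≤ j → lam j ≤ lam i) →
      (∀ i, n ≤ i → lam i = 0) → lam 0 ≤ N →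
      ((1 - q) * ∑ i ∈ Finset.range n, ∑ j ∈ Finset.range (lam i),
        q ^ (lam i - j - 1) *
          t ^ (((Finset.range n).filter (fun k => j < lam k)).card - i) =
      (∑ i ∈ Finset.range n, (t - q ^ (lam i) * t ^ (n - i))) -
        (1 - t) * ∑ j ∈ Finset.range n, ∑ i ∈ Finset.range j,
          q ^ (lam i - lam j) * t ^ (j - i)) by
    exact H (lam 0) lam hmono hbd le_rfl
  clear hmono hbd lam
  intro N
  induction N with
  | zero =>
    intro lam hmono hbd h0
    have hz : ∀ i, lam i = 0 := fun i =>
      Nat.le_zero.mp ((hmono 0 i (Nat.zero_le i)).trans h0)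
    simp only [hz, Finset.range_zero, Finset.sum_empty, Finset.sum_const_zero,
      mul_zero, Nat.sub_zero, pow_zero, one_mul]
    -- 0 = ∑ (t - t^(n-i)) - (1-t) * ∑_j ∑_{i<j} t^(j-i)
    have key : ∀ j : ℕ, (1 - t) * ∑ i ∈ Finset.range j, t ^ (j - i) = t - t ^ (1 + j) := by
      intro j
      have : ∑ i ∈ Finset.range j, t ^ (j - i) = ∑ k ∈ Finset.range j, t ^ (1 + k) := by
        rw [← Finset.sum_range_reflect (fun k => t ^ (1 + k)) j]
        refine Finset.sum_congr rfl fun i hi => ?_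
        have hi' := Finset.mem_range.mp hi
        congr 1
        omega
      rw [this, geom_aux, pow_one]
    have h3 : (1 - t) * ∑ j ∈ Finset.range n, ∑ i ∈ Finset.range j, t ^ (j - i)
        = ∑ j ∈ Finset.range n, (t - t ^ (1 + j)) := by
      rw [Finset.mul_sum]
      exact Finset.sum_congr rfl fun j _ => key j
    rw [h3]
    have h2 : ∑ i ∈ Finset.range n, (t - t ^ (n - i))
        = ∑ i ∈ Finset.range n, (t - t ^ (1 + i)) := by
      rw [← Finset.sum_range_reflect (fun i => t - t ^ (1 + i)) n]
      refine Finset.sum_congr rfl fun i hi => ?_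
      have hi' := Finset.mem_range.mp hi
      congr 2
      omega
    rw [h2, sub_self]
  | succ N ih =>
    intro lam hmono hbd h0
    by_cases hN : lam 0 ≤ N
    · exact ih lam hmono hbd hN
    have hpos : 0 < lam 0 := by omega
    -- m = number of positive parts
    set m : ℕ := ((Finset.range n).filter fun k => 0 < lam k).card with hm
    have hmn : m ≤ n := by
      have := Finset.card_filter_le (Finset.range n) (fun k => 0 < lam k)
      simpa using this
    have hup : ∀ k, m ≤ k → lam k = 0 := by
      intro k hk
      by_contra h
      have hkpos : 0 < lam k := Nat.pos_of_ne_zero h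
      have hkn : k < n := by
        by_contra hkn
        exact h (hbd k (le_of_not_gt hkn))
      have hsub : Finset.range (k + 1) ⊆ (Finset.range n).filter fun j => 0 < lam j := by
        intro x hx
        have hx' := Finset.mem_range.mp hx
        simp only [Finset.mem_filter, Finset.mem_range]
        exact ⟨by omega, lt_of_lt_of_le hkpos (hmono x k (by omega))⟩
      have := Finset.card_le_card hsub
      simp only [Finset.card_range, ← hm] at this
      omega
    have hdown : ∀ k, k < m → 0 < lam k := by
      intro k hk
      by_contra h
      have h0k : lam k = 0 := by omega
      have hsub : ((Finset.range n).filter fun j => 0 < lam j) ⊆ Finset.range k := by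
        intro x hx
        simp only [Finset.mem_filter, Finset.mem_range] at hx ⊢
        by_contra hxk
        have := hmono k x (by omega)
        omega
      have := Finset.card_le_card hsub
      simp only [Finset.card_range, ← hm] at this
      omega
    have hm0 : 0 < m := by
      by_contra h
      have := hup 0 (by omega)
      omega
    -- induction hypothesis for the partition with first column removed
    have IH := ih (fun i => lam i - 1)
      (fun i j hij => Nat.sub_le_sub_right (hmono i j hij) 1)
      (fun i hi => by simp [hbd i hi])
      (by simp; omega)
    -- column count shift
    have cshift : ∀ j : ℕ, ((Finset.range n).filter fun k => j < lam k - 1)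
        = ((Finset.range n).filter fun k => j + 1 < lam k) := by
      intro j
      ext x
      simp only [Finset.mem_filter, Finset.mem_range]
      omega
    -- (a): row decomposition
    have h1 : (∑ i ∈ Finset.range n, ∑ j ∈ Finset.range (lam i),
          q ^ (lam i - j - 1) *
            t ^ (((Finset.range n).filter (fun k => j < lam k)).card - i))
        = (∑ i ∈ Finset.range n, ∑ j ∈ Finset.range (lam i - 1),
            q ^ (lam i - 1 - j - 1) *
              t ^ (((Finset.range n).filter (fun k => j < lam k - 1)).card - i))
          + ∑ i ∈ Finset.range m, q ^ (lam i - 1) * t ^ (m - i) := by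
      rw [← extend_aux hmn (fun i => q ^ (lam i - 1) * t ^ (m - i)),
        ← Finset.sum_add_distrib]
      refine Finset.sum_congr rfl fun i hi => ?_
      by_cases him : i < m
      · have hli : 0 < lam i := hdown i him
        obtain ⟨a, ha⟩ : ∃ a, lam i = a + 1 := ⟨lam i - 1, by omega⟩
        rw [ha]
        rw [Finset.sum_range_succ']
        simp only [him, if_pos]
        congr 1
        refine Finset.sum_congr (by simp) fun j hj => ?_
        rw [cshift j]
        congr 2
        omega
      · have hli : lam i = 0 := hup i (by omega)
        simp [hli, him]
    -- (b): first single sum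
    have h2 : (∑ i ∈ Finset.range n, (t - q ^ (lam i) * t ^ (n - i)))
        = (∑ i ∈ Finset.range n, (t - q ^ (lam i - 1) * t ^ (n - i)))
          + (1 - q) * ∑ i ∈ Finset.range m, q ^ (lam i - 1) * t ^ (n - i) := by
      rw [Finset.mul_sum,
        ← extend_aux hmn (fun i => (1 - q) * (q ^ (lam i - 1) * t ^ (n - i))),
        ← Finset.sum_add_distrib]
      refine Finset.sum_congr rfl fun i hi => ?_
      by_cases him : i < m
      · have hli : 0 < lam i := hdown i him
        obtain ⟨a, ha⟩ : ∃ a, lam i = a + 1 := ⟨lam i - 1, by omega⟩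
        rw [ha]
        simp only [him, if_pos, Nat.add_sub_cancel, pow_succ]
        ring
      · have hli : lam i = 0 := hup i (by omega)
        simp [hli, him]
    -- (c): double sum
    have h3 : (1 - t) * (∑ j ∈ Finset.range n, ∑ i ∈ Finset.range j,
          q ^ (lam i - lam j) * t ^ (j - i))
        = (1 - t) * (∑ j ∈ Finset.range n, ∑ i ∈ Finset.range j,
            q ^ (lam i - 1 - (lam j - 1)) * t ^ (j - i))
          + ((1 - q) * ∑ i ∈ Finset.range m, q ^ (lam i - 1) * t ^ (n - i)
            - (1 - q) * ∑ i ∈ Finset.range m, q ^ (lam i - 1) * t ^ (m - i)) := by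
      have split : (∑ j ∈ Finset.range n, ∑ i ∈ Finset.range j,
            q ^ (lam i - lam j) * t ^ (j - i))
          = (∑ j ∈ Finset.range n, ∑ i ∈ Finset.range j,
              q ^ (lam i - 1 - (lam j - 1)) * t ^ (j - i))
            + ∑ j ∈ Finset.range n, (if m ≤ j then
                (∑ i ∈ Finset.range m, (q ^ (lam i) - q ^ (lam i - 1)) * t ^ (j - i))
              else 0) := by
        rw [← Finset.sum_add_distrib]
        refine Finset.sum_congr rfl fun j hj => ?_
        by_cases hjm : m ≤ j
        · have hlj : lam j = 0 := hup j hjm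
          simp only [hjm, if_pos, hlj, Nat.sub_zero, Nat.zero_sub]
          rw [← extend_aux hjm
            (fun i => (q ^ (lam i) - q ^ (lam i - 1)) * t ^ (j - i)),
            ← Finset.sum_add_distrib]
          refine Finset.sum_congr rfl fun i hi => ?_
          by_cases him : i < m
          · simp only [him, if_pos]
            ring
          · have hli : lam i = 0 := hup i (by omega)
            simp [hli, him]
        · have hjm' : j < m := by omega
          simp only [hjm, if_neg, not_false_iff, add_zero]
          refine Finset.sum_congr rfl fun i hi => ?_
          have hi' := Finset.mem_range.mp hi
          have hlj : 0 < lam j := hdown j hjm'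
          have hli : 0 < lam i := hdown i (by omega)
          congr 2
          omega
      rw [split, mul_add]
      congr 1
      -- (1-t) * Σ_{m≤j<n} Σ_{i<m} (q^{λi}-q^{λi-1}) t^{j-i} = (1-q)(En - E)
      have step1 : (∑ j ∈ Finset.range n, (if m ≤ j then
            (∑ i ∈ Finset.range m, (q ^ (lam i) - q ^ (lam i - 1)) * t ^ (j - i))
          else 0))
          = ∑ i ∈ Finset.range m, ∑ k ∈ Finset.range (n - m),
              (q ^ (lam i) - q ^ (lam i - 1)) * t ^ (m + k - i) := by
        rw [← Finset.sum_filter]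
        have hfil : (Finset.range n).filter (fun j => m ≤ j) = Finset.Ico m n := by
          ext x
          simp only [Finset.mem_filter, Finset.mem_range, Finset.mem_Ico]
          omega
        rw [hfil, Finset.sum_Ico_eq_sum_range]
        rw [Finset.sum_comm]
      rw [step1, Finset.mul_sum]
      have step2 : ∀ i ∈ Finset.range m,
          (1 - t) * ∑ k ∈ Finset.range (n - m),
              (q ^ (lam i) - q ^ (lam i - 1)) * t ^ (m + k - i)
          = (q ^ (lam i) - q ^ (lam i - 1)) * (t ^ (m - i) - t ^ (n - i)) := by
        intro i hi
        have hi' := Finset.mem_range.mp hi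
        have he : ∀ k ∈ Finset.range (n - m),
            (q ^ (lam i) - q ^ (lam i - 1)) * t ^ (m + k - i)
            = (q ^ (lam i) - q ^ (lam i - 1)) * t ^ ((m - i) + k) := by
          intro k hk
          congr 2
          omega
        rw [Finset.sum_congr rfl he, ← Finset.mul_sum, ← mul_assoc,
          mul_comm (1 - t) (q ^ (lam i) - q ^ (lam i - 1)), mul_assoc, geom_aux]
        have hexp : m - i + (n - m) = n - i := by omega
        rw [hexp]
      rw [Finset.sum_congr rfl step2, Finset.mul_sum, Finset.mul_sum,
        ← Finset.sum_sub_distrib]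
      refine Finset.sum_congr rfl fun i hi => ?_
      have hi' := Finset.mem_range.mp hi
      have hli : 0 < lam i := hdown i hi'
      obtain ⟨a, ha⟩ : ∃ a, lam i = a + 1 := ⟨lam i - 1, by omega⟩
      rw [ha]
      simp only [Nat.add_sub_cancel, pow_succ]
      ring
    rw [h1, h2, h3]
    simp only [cshift] at IH ⊢
    linear_combination IH
end
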